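/- arXiv:1112.2969 — 3 statements merged into one kernel-verified Lean document; each statement's English description precedes it below -/
import Mathlib

section
/- Let H be a cocommutative Hopf algebra over a field k, M an H-module, α ∈ H ⊗ H, and m ∈ M an element that is not torsion (i.e., hm = 0 implies h = 0 for h ∈ H). Then α ⊗_H m = 0 in (H ⊗ H) ⊗_H M if and only if α = 0. -/
open TensorProduct

/-- The submodule of relations defining `(H ⊗ H) ⊗_H M`, where `H ⊗ H` is a right
`H`-module via `α · h = α · Δ(h)`. -/
noncomputable def pseudoRel (k H M : Type*) [CommRing k] [Ring H] [HopfAlgebra k H]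
    [AddCommGroup M] [Module k M] [Module H M] [IsScalarTower k H M] :
    Submodule k ((H ⊗[k] H) ⊗[k] M) :=
  Submodule.span k {x | ∃ (α : H ⊗[k] H) (h : H) (m : M),
    x = (α * Coalgebra.comul (R := k) h) ⊗ₜ[k] m - α ⊗ₜ[k] (h • m)}

open TensorProduct Coalgebra LinearMap

noncomputable section Aux

variable (k H : Type*) [CommRing k] [Ring H] [HopfAlgebra k H]

local notation "𝑺" => HopfAlgebra.antipode (R := k) (A := H)

/-- the inverse Galois map `x ⊗ y ↦ x S(y₁) ⊗ y₂` -/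
def psiMap : H ⊗[k] H →ₗ[k] H ⊗[k] H :=
  (LinearMap.rTensor H (LinearMap.mul' k H)) ∘ₗ
    (TensorProduct.assoc k H H H).symm.toLinearMap ∘ₗ
      (LinearMap.lTensor H ((LinearMap.rTensor H 𝑺) ∘ₗ Coalgebra.comul))

/-- the Galois map `x ⊗ y ↦ x y₁ ⊗ y₂` -/
def phiMap : H ⊗[k] H →ₗ[k] H ⊗[k] H :=
  (LinearMap.rTensor H (LinearMap.mul' k H)) ∘ₗ
    (TensorProduct.assoc k H H H).symm.toLinearMap ∘ₗ
      (LinearMap.lTensor H Coalgebra.comul)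

/-- `u ⊗ (v ⊗ w) ↦ (u * S v) ⊗ w` -/
def xiS : H ⊗[k] (H ⊗[k] H) →ₗ[k] H ⊗[k] H :=
  (LinearMap.rTensor H ((LinearMap.mul' k H) ∘ₗ LinearMap.lTensor H 𝑺)) ∘ₗ
    (TensorProduct.assoc k H H H).symm.toLinearMap

/-- `u ⊗ (v ⊗ w) ↦ (S u * v) ⊗ w` -/
def xiS' : H ⊗[k] (H ⊗[k] H) →ₗ[k] H ⊗[k] H :=
  (LinearMap.rTensor H ((LinearMap.mul' k H) ∘ₗ LinearMap.rTensor H 𝑺)) ∘ₗ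
    (TensorProduct.assoc k H H H).symm.toLinearMap

variable {k H}

@[simp] lemma xiS_tmul (u v w : H) :
    xiS k H (u ⊗ₜ[k] (v ⊗ₜ[k] w)) = (u * 𝑺 v) ⊗ₜ[k] w := by
  simp [xiS]

@[simp] lemma xiS'_tmul (u v w : H) :
    xiS' k H (u ⊗ₜ[k] (v ⊗ₜ[k] w)) = (𝑺 u * v) ⊗ₜ[k] w := by
  simp [xiS']

lemma psiMap_tmul (x y : H) {ι : Type*} (r : Coalgebra.Repr k y ι) :
    psiMap k H (x ⊗ₜ[k] y) = ∑ i ∈ r.index, (x * 𝑺 (r.left i)) ⊗ₜ[k] r.right i := by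
  simp only [psiMap, LinearMap.comp_apply, LinearMap.lTensor_tmul, LinearMap.comp_apply,
    ← r.eq, map_sum, tmul_sum]
  simp

lemma phiMap_tmul (x y : H) {ι : Type*} (r : Coalgebra.Repr k y ι) :
    phiMap k H (x ⊗ₜ[k] y) = ∑ i ∈ r.index, (x * r.left i) ⊗ₜ[k] r.right i := by
  simp only [phiMap, LinearMap.comp_apply, LinearMap.lTensor_tmul,
    ← r.eq, map_sum, tmul_sum]
  simp

lemma sum_counit_smul {h : H} {ι : Type*} (r : Coalgebra.Repr k h ι) :
    ∑ i ∈ r.index, counit (R := k) (r.left i) • r.right i = h := by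
  have h2 := Coalgebra.sum_counit_tmul_eq (R := k) r
  apply_fun (TensorProduct.lid k H) at h2
  simp only [map_sum, lid_tmul] at h2
  simpa using h2

lemma sum_smul_counit {h : H} {ι : Type*} (r : Coalgebra.Repr k h ι) :
    ∑ i ∈ r.index, counit (R := k) (r.right i) • r.left i = h := by
  have h2 := Coalgebra.sum_tmul_counit_eq (R := k) r
  apply_fun (TensorProduct.rid k H) at h2
  simp only [map_sum, rid_tmul] at h2
  simpa using h2

lemma sum_algebraMap_counit_tmul {h : H} {ι : Type*} (r : Coalgebra.Repr k h ι) :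
    ∑ x ∈ r.index, (algebraMap k H) (counit (R := k) (r.left x)) ⊗ₜ[k] r.right x
      = 1 ⊗ₜ[k] h := by
  conv_rhs => rw [← _root_.sum_counit_smul r, tmul_sum]
  refine Finset.sum_congr rfl fun i _ => ?_
  rw [Algebra.algebraMap_eq_smul_one, smul_tmul]

/-- `∑ h₁ S(h₂) ⊗ h₃ = 1 ⊗ h` -/
lemma sum_A (h : H) {ι κ : Type*} (r : Coalgebra.Repr k h ι)
    (c : ∀ i : ι, Coalgebra.Repr k (r.right i) κ) :
    ∑ i ∈ r.index, ∑ j ∈ (c i).index,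
      (r.left i * 𝑺 ((c i).left j)) ⊗ₜ[k] (c i).right j = 1 ⊗ₜ[k] h := by
  have key := Coalgebra.sum_tmul_tmul_eq r (fun i => ℛ k (r.left i)) c
  apply_fun (xiS (k := k) (H := H)) at key
  simp only [map_sum, xiS_tmul] at key
  rw [← key]
  have : ∀ i ∈ r.index, ∑ j ∈ (ℛ k (r.left i)).index,
      ((ℛ k (r.left i)).left j * 𝑺 ((ℛ k (r.left i)).right j)) ⊗ₜ[k] r.right i
      = algebraMap k H (counit (R := k) (r.left i)) ⊗ₜ[k] r.right i := by
    intro i _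
    rw [← TensorProduct.sum_tmul, HopfAlgebra.sum_mul_antipode_eq_algebraMap_counit]
  rw [Finset.sum_congr rfl this]
  exact sum_algebraMap_counit_tmul r

/-- `∑ S(h₁) h₂ ⊗ h₃ = 1 ⊗ h` -/
lemma sum_B (h : H) {ι κ : Type*} (r : Coalgebra.Repr k h ι)
    (c : ∀ i : ι, Coalgebra.Repr k (r.right i) κ) :
    ∑ i ∈ r.index, ∑ j ∈ (c i).index,
      (𝑺 (r.left i) * (c i).left j) ⊗ₜ[k] (c i).right j = 1 ⊗ₜ[k] h := by
  have key := Coalgebra.sum_tmul_tmul_eq r (fun i => ℛ k (r.left i)) c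
  apply_fun (xiS' (k := k) (H := H)) at key
  simp only [map_sum, xiS'_tmul] at key
  rw [← key]
  have : ∀ i ∈ r.index, ∑ j ∈ (ℛ k (r.left i)).index,
      (𝑺 ((ℛ k (r.left i)).left j) * (ℛ k (r.left i)).right j) ⊗ₜ[k] r.right i
      = algebraMap k H (counit (R := k) (r.left i)) ⊗ₜ[k] r.right i := by
    intro i _
    rw [← TensorProduct.sum_tmul, HopfAlgebra.sum_antipode_mul_eq_algebraMap_counit]
  rw [Finset.sum_congr rfl this]
  exact sum_algebraMap_counit_tmul r

lemma mul_algConst (x : H) (c : k) : x * algebraMap k H c = c • x := by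
  rw [← Algebra.commutes, ← Algebra.smul_def]

lemma antipode_mul_rev (a b : H) : 𝑺 (a * b) = 𝑺 b * 𝑺 a := by
  set ra := ℛ k a
  set rb := ℛ k b
  set ca : ∀ i : ra.ι, Coalgebra.Repr k (ra.right i) (H × H) := fun i => ℛ k (ra.right i) with hca
  set cb : ∀ i : rb.ι, Coalgebra.Repr k (rb.right i) (H × H) := fun i => ℛ k (rb.right i) with hcb
  set E : H := ∑ i' ∈ rb.index, ∑ j' ∈ (cb i').index, ∑ i ∈ ra.index, ∑ j ∈ (ca i).index,
      𝑺 (rb.left i') * (𝑺 (ra.left i) *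
        (((ca i).left j * (cb i').left j') * 𝑺 ((ca i).right j * (cb i').right j'))) with hE
  have way2 : E = 𝑺 (a * b) := by
    have step1 : ∀ (u v : H), ∑ i ∈ ra.index, ∑ j ∈ (ca i).index,
        𝑺 (ra.left i) * (((ca i).left j * u) * 𝑺 ((ca i).right j * v))
          = u * 𝑺 (a * v) := by
      intro u v
      have hB := sum_B a ra ca
      apply_fun (LinearMap.mul' k H ∘ₗ
        TensorProduct.map (LinearMap.mulRight k u) (𝑺 ∘ₗ LinearMap.mulRight k v)) at hB
      simp only [map_sum, comp_apply, map_tmul, mul'_apply, mulRight_apply, one_mul] at hB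
      rw [← hB]
      simp [mul_assoc]
    have step2 : ∑ i' ∈ rb.index, ∑ j' ∈ (cb i').index,
        𝑺 (rb.left i') * ((cb i').left j' * 𝑺 (a * (cb i').right j')) = 𝑺 (a * b) := by
      have hB := sum_B b rb cb
      apply_fun (LinearMap.mul' k H ∘ₗ
        TensorProduct.map LinearMap.id (𝑺 ∘ₗ LinearMap.mulLeft k a)) at hB
      simp only [map_sum, comp_apply, map_tmul, mul'_apply, mulLeft_apply, id_coe,
        id_eq, one_mul] at hB
      rw [← hB]
      simp [mul_assoc]
    rw [hE, ← step2]
    refine Finset.sum_congr rfl fun i' _ => Finset.sum_congr rfl fun j' _ => ?_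
    rw [← step1 ((cb i').left j') ((cb i').right j')]
    simp only [Finset.mul_sum]
  have way1 : E = 𝑺 b * 𝑺 a := by
    have swap : E = ∑ i' ∈ rb.index, ∑ i ∈ ra.index, ∑ j ∈ (ca i).index,
        ∑ j' ∈ (cb i').index,
        𝑺 (rb.left i') * (𝑺 (ra.left i) *
          (((ca i).left j * (cb i').left j') * 𝑺 ((ca i).right j * (cb i').right j'))) := by
      rw [hE]
      refine Finset.sum_congr rfl fun i' _ => ?_
      rw [Finset.sum_comm]
      refine Finset.sum_congr rfl fun i _ => Finset.sum_comm
    have inner : ∀ (i' : rb.ι) (i : ra.ι),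
        ∑ j ∈ (ca i).index, ∑ j' ∈ (cb i').index,
          (((ca i).left j * (cb i').left j') * 𝑺 ((ca i).right j * (cb i').right j'))
        = algebraMap k H (counit (R := k) (ra.right i) * counit (R := k) (rb.right i')) := by
      intro i' i
      have hprod := HopfAlgebra.sum_mul_antipode_eq_algebraMap_counit ((ca i).mul (cb i'))
      rw [← Bialgebra.counit_mul (R := k),
        ← Finset.sum_product ((ca i).index) ((cb i').index)
          (fun p => (ca i).left p.1 * (cb i').left p.2 *
            HopfAlgebra.antipode (R := k) ((ca i).right p.1 * (cb i').right p.2))]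
      exact hprod
    rw [swap]
    have rhs : 𝑺 b * 𝑺 a = ∑ i' ∈ rb.index, ∑ i ∈ ra.index,
        (counit (R := k) (rb.right i') • 𝑺 (rb.left i')) *
          (counit (R := k) (ra.right i) • 𝑺 (ra.left i)) := by
      conv_lhs => rw [← _root_.sum_smul_counit rb, ← _root_.sum_smul_counit ra]
      rw [map_sum, map_sum, Finset.sum_mul_sum]
      simp [Finset.mul_sum]
    rw [rhs]
    refine Finset.sum_congr rfl fun i' _ => Finset.sum_congr rfl fun i _ => ?_
    simp only [← Finset.mul_sum]
    rw [inner i' i, mul_algConst]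
    simp [mul_smul_comm, smul_mul_assoc, smul_smul, mul_comm]
  rw [← way2, way1]

lemma phiMap_psiMap (z : H ⊗[k] H) : phiMap k H (psiMap k H z) = z := by
  induction z using TensorProduct.induction_on with
  | zero => simp
  | add u v hu hv => rw [map_add, map_add, hu, hv]
  | tmul x y =>
    set r := ℛ k y
    set c : ∀ i : r.ι, Coalgebra.Repr k (r.right i) (H × H) := fun i => ℛ k (r.right i) with hc
    rw [psiMap_tmul x y r, map_sum]
    have step : ∀ i ∈ r.index, phiMap k H ((x * 𝑺 (r.left i)) ⊗ₜ[k] r.right i)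
        = ∑ j ∈ (c i).index,
            (x * (𝑺 (r.left i) * (c i).left j)) ⊗ₜ[k] (c i).right j := by
      intro i _
      rw [phiMap_tmul _ _ (c i)]
      exact Finset.sum_congr rfl fun j _ => by rw [mul_assoc]
    rw [Finset.sum_congr rfl step]
    have key := sum_B y r c
    apply_fun (LinearMap.rTensor H (LinearMap.mulLeft k x)) at key
    simp only [map_sum, rTensor_tmul, mulLeft_apply, mul_one] at key
    exact key

lemma psiMap_mul_comul (z : H ⊗[k] H) (h : H) :
    psiMap k H (z * Coalgebra.comul (R := k) h) = psiMap k H z * (1 ⊗ₜ[k] h) := by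
  induction z using TensorProduct.induction_on with
  | zero => rw [zero_mul, map_zero, zero_mul]
  | add u v hu hv => rw [add_mul, map_add, hu, hv, map_add, add_mul]
  | tmul x y =>
    set rh := ℛ k h
    set crh : ∀ j : rh.ι, Coalgebra.Repr k (rh.right j) (H × H) := fun j => ℛ k (rh.right j) with hcrh
    set ry := ℛ k y
    have expand : (x ⊗ₜ[k] y) * Coalgebra.comul (R := k) h
        = ∑ j ∈ rh.index, (x * rh.left j) ⊗ₜ[k] (y * rh.right j) := by
      rw [← rh.eq, Finset.mul_sum]
      exact Finset.sum_congr rfl fun j _ => Algebra.TensorProduct.tmul_mul_tmul ..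
    rw [expand, map_sum]
    have step : ∀ j ∈ rh.index, psiMap k H ((x * rh.left j) ⊗ₜ[k] (y * rh.right j))
        = ∑ i ∈ ry.index, ∑ l ∈ (crh j).index,
            (x * (rh.left j * 𝑺 ((crh j).left l)) * 𝑺 (ry.left i)) ⊗ₜ[k]
              (ry.right i * (crh j).right l) := by
      intro j _
      rw [psiMap_tmul _ _ (ry.mul (crh j)),
        ← Finset.sum_product (ry.index) ((crh j).index)
          (fun p => (x * (rh.left j * 𝑺 ((crh j).left p.2)) * 𝑺 (ry.left p.1)) ⊗ₜ[k]
            (ry.right p.1 * (crh j).right p.2))]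
      refine Finset.sum_congr rfl fun p _ => ?_
      simp only [Coalgebra.Repr.mul_left, Coalgebra.Repr.mul_right, antipode_mul_rev]
      congr 1
      simp [mul_assoc]
    rw [Finset.sum_congr rfl step, Finset.sum_comm]
    rw [psiMap_tmul x y ry, Finset.sum_mul]
    refine Finset.sum_congr rfl fun i _ => ?_
    have key := sum_A h rh crh
    apply_fun (TensorProduct.map ((LinearMap.mulRight k (𝑺 (ry.left i))) ∘ₗ
      (LinearMap.mulLeft k x)) (LinearMap.mulLeft k (ry.right i))) at key
    simp only [map_sum, map_tmul, comp_apply, mulLeft_apply, mulRight_apply, mul_one] at key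
    rw [key]
    simp [Algebra.TensorProduct.tmul_mul_tmul]

section Mod

variable {k H M : Type*} [CommRing k] [Ring H] [HopfAlgebra k H]
  [AddCommGroup M] [Module k M] [Module H M] [IsScalarTower k H M]

/-- the `H`-action on `M` as a `k`-bilinear map -/
def actL : H →ₗ[k] M →ₗ[k] M := LinearMap.mk₂ k (· • ·)
  (fun h h' m' => add_smul h h' m')
  (fun c h m' => smul_assoc c h m')
  (fun h m m' => smul_add h m m')
  (fun r x n => by
    show x • (r • n) = r • (x • n)
    rw [← algebraMap_smul H r n, ← mul_smul, ← Algebra.commutes, mul_smul,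
      algebraMap_smul])

@[simp] lemma actL_apply (h : H) (m' : M) : actL (k := k) h m' = h • m' := rfl

/-- `m' ↦ (u ⊗ v ↦ u ⊗ (v • m'))` -/
def lamM : M →ₗ[k] (H ⊗[k] H →ₗ[k] H ⊗[k] M) :=
  (LinearMap.lTensorHom H).comp (actL (k := k) (H := H) (M := M)).flip

@[simp] lemma lamM_tmul (m' : M) (u v : H) :
    lamM m' (u ⊗ₜ[k] v) = u ⊗ₜ[k] (v • m') := rfl

/-- the total map `(H ⊗ H) ⊗ M → H ⊗ M`, `(x ⊗ y) ⊗ m' ↦ x S(y₁) ⊗ y₂ • m'` -/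
def Tmap : (H ⊗[k] H) ⊗[k] M →ₗ[k] H ⊗[k] M :=
  TensorProduct.lift ((LinearMap.lcomp k (H ⊗[k] M) (psiMap k H) ∘ₗ lamM).flip)

@[simp] lemma Tmap_tmul (z : H ⊗[k] H) (m' : M) :
    Tmap (z ⊗ₜ[k] m') = lamM m' (psiMap k H z) := rfl

lemma lamM_mul_right (w : H ⊗[k] H) (h : H) (m' : M) :
    lamM m' (w * (1 ⊗ₜ[k] h)) = lamM (h • m') w := by
  induction w using TensorProduct.induction_on with
  | zero => rw [zero_mul, map_zero, map_zero]
  | add u v hu hv => rw [add_mul, map_add, map_add, hu, hv]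
  | tmul u v =>
    rw [Algebra.TensorProduct.tmul_mul_tmul, mul_one, lamM_tmul, lamM_tmul, mul_smul]

end Mod
end Aux


open TensorProduct

/-- for a cocommutative Hopf algebra `H` over a field `k`, an `H`-module
`M`, `α ∈ H ⊗ H` and `m ∈ M` not a torsion element (`h • m = 0 → h = 0`), one has
`α ⊗_H m = 0` in `(H ⊗ H) ⊗_H M` if and only if `α = 0`. -/
theorem stmt_3 (k H M : Type*) [Field k] [Ring H] [HopfAlgebra k H]
    [AddCommGroup M] [Module k M] [Module H M] [IsScalarTower k H M]
    (hcocomm : (TensorProduct.comm k H H).toLinearMap ∘ₗ Coalgebra.comul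
      = (Coalgebra.comul (R := k) (A := H)))
    (α : H ⊗[k] H) (m : M) (hm : ∀ h : H, h • m = 0 → h = 0) :
    (Submodule.Quotient.mk (α ⊗ₜ[k] m)
        = (0 : ((H ⊗[k] H) ⊗[k] M) ⧸ pseudoRel k H M)) ↔ α = 0 := by
  constructor
  · intro h0
    rw [Submodule.Quotient.mk_eq_zero] at h0
    have hker : pseudoRel k H M ≤ LinearMap.ker (Tmap (k := k) (H := H) (M := M)) := by
      rw [pseudoRel, Submodule.span_le]
      rintro x ⟨α', h, m', rfl⟩
      simp only [SetLike.mem_coe, LinearMap.mem_ker, map_sub, Tmap_tmul]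
      rw [psiMap_mul_comul, lamM_mul_right, sub_self]
    have h1 : Tmap (α ⊗ₜ[k] m) = 0 := hker h0
    rw [Tmap_tmul] at h1
    have hσ : Function.Injective ((actL (k := k) (H := H) (M := M)).flip m) := by
      intro a b e
      simp only [LinearMap.flip_apply, actL_apply] at e
      have hz : (a - b) • m = 0 := by rw [sub_smul, e, sub_self]
      exact sub_eq_zero.mp (hm _ hz)
    have hinj : Function.Injective (lamM (k := k) (H := H) m) := by
      show Function.Injective
        (LinearMap.lTensor H ((actL (k := k) (H := H) (M := M)).flip m))
      exact Module.Flat.lTensor_preserves_injective_linearMap _ hσ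
    have hpsi : psiMap k H α = 0 := by
      apply hinj
      rw [h1, map_zero]
    have := phiMap_psiMap (k := k) α
    rw [hpsi, map_zero] at this
    exact this.symm
  · rintro rfl
    rw [zero_tmul]
    exact Submodule.Quotient.mk_zero _
end

section
/- Let L be a finite Lie conformal algebra over C[∂] (i.e., finitely generated as a C[∂]-module). Then the lower central series L = L⁽⁰⁾ ⊇ L^[1] ⊇ L^[2] ⊇ ⋯, defined by L^[n+1] = [L, L^[n]], stabilizes: there exists n such that L^[n] = L^[m] for all m ≥ n. -/
open Polynomial

/-- A Lie conformal algebra over `ℂ[∂]`, presented via its `n`-th products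
`a_(n) b` (the coefficients of the `λ`-bracket `[a_λ b] = Σ λⁿ/n! a_(n) b`). -/
class LieConformalAlgebra (L : Type*) [AddCommGroup L] [Module ℂ L]
    [Module ℂ[X] L] [IsScalarTower ℂ ℂ[X] L] where
  nProd : ℕ → L →ₗ[ℂ] L →ₗ[ℂ] L
  locality : ∀ a b : L, ∃ N : ℕ, ∀ n ≥ N, nProd n a b = 0
  sesq_left : ∀ (n : ℕ) (a b : L),
    nProd n ((X : ℂ[X]) • a) b = (-(n : ℂ)) • nProd (n - 1) a b
  sesq_right : ∀ (n : ℕ) (a b : L),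
    nProd n a ((X : ℂ[X]) • b)
      = (X : ℂ[X]) • nProd n a b + (n : ℂ) • nProd (n - 1) a b
  skew : ∀ (n : ℕ) (a b : L), ∃ N₀ : ℕ, ∀ N ≥ N₀,
    nProd n a b = -∑ j ∈ Finset.range N,
      (((-1 : ℂ) ^ (n + j)) * ((j.factorial : ℂ))⁻¹) •
        ((X : ℂ[X]) ^ j • nProd (n + j) b a)
  jacobi : ∀ (m n : ℕ) (a b c : L),
    nProd m a (nProd n b c) - nProd n b (nProd m a c)
      = ∑ j ∈ Finset.range (m + 1),
          ((m.choose j : ℂ)) • nProd (m + n - j) (nProd j a b) c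

namespace LieConformalAlgebra

variable {L : Type*} [AddCommGroup L] [Module ℂ L]
  [Module ℂ[X] L] [IsScalarTower ℂ ℂ[X] L] [LieConformalAlgebra L]

/-- `[A, B]`: the `ℂ[∂]`-submodule generated by all `n`-th products of elements of `A`
and `B` (i.e. by all coefficients of `λ`-brackets). -/
noncomputable def bracketSub (A B : Submodule ℂ[X] L) : Submodule ℂ[X] L :=
  Submodule.span ℂ[X]
    {x | ∃ (n : ℕ) (a b : L), a ∈ A ∧ b ∈ B ∧ x = nProd n a b}

/-- The central series `L^[0] = L`, `L^[n+1] = [L, L^[n]]`. -/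
noncomputable def lcs : ℕ → Submodule ℂ[X] L
  | 0 => ⊤
  | n + 1 => bracketSub ⊤ (lcs n)

end LieConformalAlgebra

/-! ### Auxiliary material for the proof -/

section AuxShift

variable {L : Type*} [AddCommGroup L] [Module ℂ L]
  [Module ℂ[X] L] [IsScalarTower ℂ ℂ[X] L]

lemma C_smul_eq (c : ℂ) (y : L) : (C c : ℂ[X]) • y = c • y := by
  rw [← Polynomial.algebraMap_eq, algebraMap_smul]

/-- The operator on `λ`-coefficient sequences corresponding to applying `∂` to the second
argument of the bracket. -/
noncomputable def shOp (g : ℕ → L) : ℕ → L := fun n => (X : ℂ[X]) • g n + (n : ℂ) • g (n - 1)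

lemma shOp_iter_support {M : Submodule ℂ[X] L} {g : ℕ → L} {m : ℕ}
    (hg : ∀ i, m < i → g i ∈ M) : ∀ k i, m + k < i → shOp^[k] g i ∈ M := by
  intro k
  induction k with
  | zero => intro i hi; simpa using hg i (by omega)
  | succ k ih =>
    intro i hi
    rw [Function.iterate_succ_apply']
    exact M.add_mem (M.smul_mem _ (ih i (by omega)))
      (M.smul_of_tower_mem _ (ih (i - 1) (by omega)))

lemma shOp_iter_lead {M : Submodule ℂ[X] L} {g : ℕ → L} {m : ℕ}
    (hg : ∀ i, m < i → g i ∈ M) :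
    ∀ k, shOp^[k] g (m + k) - ((∏ j ∈ Finset.range k, ((m + j + 1 : ℕ) : ℂ)) • g m) ∈ M := by
  intro k
  induction k with
  | zero => simp
  | succ k ih =>
    have h1 : (X : ℂ[X]) • shOp^[k] g (m + k + 1) ∈ M :=
      M.smul_mem _ (shOp_iter_support hg k _ (by omega))
    have h2 : ((m + k + 1 : ℕ) : ℂ) • (shOp^[k] g (m + k)
        - ((∏ j ∈ Finset.range k, ((m + j + 1 : ℕ) : ℂ)) • g m)) ∈ M :=
      M.smul_of_tower_mem _ ih
    rw [Function.iterate_succ_apply']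
    show (X : ℂ[X]) • shOp^[k] g (m + (k+1)) + ((m + (k+1) : ℕ) : ℂ) • shOp^[k] g (m + (k+1) - 1)
      - _ ∈ M
    have hidx : m + (k + 1) - 1 = m + k := by omega
    have hidx2 : m + (k + 1) = m + k + 1 := by omega
    rw [hidx, hidx2, Finset.prod_range_succ]
    have hsc : (((∏ j ∈ Finset.range k, ((m + j + 1 : ℕ) : ℂ)) * ((m + k + 1 : ℕ) : ℂ)) • g m)
        = ((m + k + 1 : ℕ) : ℂ) • ((∏ j ∈ Finset.range k, ((m + j + 1 : ℕ) : ℂ)) • g m) := by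
      rw [smul_smul, mul_comm]
    rw [hsc]
    rw [smul_sub] at h2
    have := M.add_mem h1 h2
    convert this using 1
    abel

lemma mem_of_c_smul_mem {M : Submodule ℂ[X] L} {z : ℂ} (hz : z ≠ 0) {x : L}
    (h : z • x ∈ M) : x ∈ M := by
  have := M.smul_of_tower_mem z⁻¹ h
  rwa [inv_smul_smul₀ hz] at this

end AuxShift

namespace LieConformalAlgebra

variable {L : Type*} [AddCommGroup L] [Module ℂ L]
  [Module ℂ[X] L] [IsScalarTower ℂ ℂ[X] L] [LieConformalAlgebra L]

lemma nProd_poly_smul (a b : L) (q : ℂ[X]) :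
    ∀ n, nProd n a (q • b)
      = q.sum fun k c => (C c : ℂ[X]) • (shOp^[k] (fun m => nProd m a b) n) := by
  induction q using Polynomial.induction_on with
  | C c =>
    intro n
    rw [Polynomial.sum_C_index (by simp), Function.iterate_zero, id_eq, C_smul_eq,
      map_smul, C_smul_eq]
  | add p q hp hq =>
    intro n
    rw [add_smul, map_add, hp n, hq n,
      Polynomial.sum_add_index _ _ _ (fun i => by simp) (fun i c d => by rw [C_add, add_smul])]
  | monomial k c ih =>
    have ihk : ∀ m, nProd m a ((C c * X ^ k) • b)
        = (C c : ℂ[X]) • (shOp^[k] (fun m => nProd m a b) m) := by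
      intro m
      rw [ih m, Polynomial.C_mul_X_pow_eq_monomial,
        Polynomial.sum_monomial_index _ _ (by simp)]
    intro n
    rw [Polynomial.C_mul_X_pow_eq_monomial, Polynomial.sum_monomial_index _ _ (by simp),
      ← Polynomial.C_mul_X_pow_eq_monomial]
    have e : (C c * X ^ (k + 1)) • b = (X : ℂ[X]) • ((C c * X ^ k) • b) := by
      rw [← mul_smul]; ring_nf
    rw [e, sesq_right, ihk n, ihk (n - 1), Function.iterate_succ_apply']
    show _ = (C c : ℂ[X]) • ((X : ℂ[X]) • shOp^[k] (fun m => nProd m a b) n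
        + (n : ℂ) • shOp^[k] (fun m => nProd m a b) (n - 1))
    rw [smul_add, smul_comm ((X : ℂ[X])) (C c : ℂ[X]), smul_comm ((n : ℂ)) ((C c : ℂ[X]))]

/-- Key lemma: if `p(∂) • b` has all its products with `a` in `M` for some `p ≠ 0`,
then so does `b` itself. -/
lemma nProd_mem_of_poly_smul {M : Submodule ℂ[X] L} {a b : L} {p : ℂ[X]} (hp : p ≠ 0)
    (h0 : ∀ m, nProd m a (p • b) ∈ M) (n : ℕ) : nProd n a b ∈ M := by
  obtain ⟨N, hN⟩ := locality a b
  set g : ℕ → L := fun m => nProd m a b with hg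
  set d := p.natDegree with hd
  suffices h : ∀ k n, N ≤ n + k → g n ∈ M from h N n (by omega)
  intro k
  induction k with
  | zero => intro n hn; have : g n = 0 := hN n (by omega); rw [this]; exact M.zero_mem
  | succ k ih =>
    intro n hn
    by_cases hc : N ≤ n + k
    · exact ih n hc
    · have hup : ∀ i, n < i → g i ∈ M := fun i hi => ih i (by omega)
      have hsum : (∑ j ∈ Finset.range (d + 1),
          (C (p.coeff j) : ℂ[X]) • shOp^[j] g (n + d)) ∈ M := by
        have h1 := h0 (n + d)
        rwa [nProd_poly_smul a b p (n + d),
          Polynomial.sum_over_range _ (fun j => by simp)] at h1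
      rw [Finset.sum_range_succ] at hsum
      have hlow : (∑ j ∈ Finset.range d,
          (C (p.coeff j) : ℂ[X]) • shOp^[j] g (n + d)) ∈ M := by
        refine Submodule.sum_mem M fun j hj => ?_
        have hj' : j < d := Finset.mem_range.mp hj
        exact M.smul_mem _ (shOp_iter_support hup j (n + d) (by omega))
      have htop : (C (p.coeff d) : ℂ[X]) • shOp^[d] g (n + d) ∈ M := by
        have := M.sub_mem hsum hlow
        simpa using this
      have hlead := shOp_iter_lead hup d
      have h3 := M.smul_mem (C (p.coeff d) : ℂ[X]) hlead
      rw [smul_sub] at h3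
      have h4 := M.sub_mem htop h3
      rw [sub_sub_cancel] at h4
      rw [C_smul_eq, smul_smul] at h4
      refine mem_of_c_smul_mem (mul_ne_zero ?_ ?_) h4
      · exact Polynomial.leadingCoeff_ne_zero.mpr hp
      · exact Finset.prod_ne_zero_iff.mpr fun j hj =>
          Nat.cast_ne_zero.mpr (Nat.succ_ne_zero _)

lemma bracketSub_mono {A B : Submodule ℂ[X] L} (h : A ≤ B) :
    bracketSub ⊤ A ≤ bracketSub ⊤ B := by
  refine Submodule.span_mono ?_
  rintro x ⟨n, a, b, ha, hb, rfl⟩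
  exact ⟨n, a, b, ha, h hb, rfl⟩

lemma bracketSub_le_of_torsion {A B : Submodule ℂ[X] L}
    (ht : ∀ x ∈ B, ∃ p : ℂ[X], p ≠ 0 ∧ p • x ∈ A) :
    bracketSub ⊤ B ≤ bracketSub ⊤ A := by
  rw [bracketSub, Submodule.span_le]
  rintro x ⟨n, a, b, -, hb, rfl⟩
  obtain ⟨p, hp, hpA⟩ := ht b hb
  refine nProd_mem_of_poly_smul hp (fun m => ?_) n
  rw [bracketSub]
  exact Submodule.subset_span ⟨m, a, p • b, trivial, hpA, rfl⟩

lemma lcs_succ (n : ℕ) : lcs (L := L) (n + 1) = bracketSub ⊤ (lcs n) := rfl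

lemma lcs_antitone : ∀ n, lcs (L := L) (n + 1) ≤ lcs n := by
  intro n
  induction n with
  | zero => exact le_top
  | succ n ih => exact bracketSub_mono ih

end LieConformalAlgebra

section AuxRank

variable {R : Type*} [CommRing R] [Nontrivial R] {L : Type*} [AddCommGroup L] [Module R L]

/-- If `A ≤ B` have the same finite rank, then `B/A` is torsion. -/
lemma torsion_of_rank_le {A B : Submodule R L} (hAB : A ≤ B)
    (hr : Module.rank R B ≤ Module.rank R A)
    (hfin : Module.rank R A < Cardinal.aleph0) :
    ∀ x ∈ B, ∃ p : R, p ≠ 0 ∧ p • x ∈ A := by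
  intro x hx
  have e : Module.rank R ↥(A.comap B.subtype) = Module.rank R ↥A :=
    (Submodule.comapSubtypeEquivOfLe hAB).rank_eq
  have h1 := rank_quotient_add_rank_le (R := R) (M := B) (A.comap B.subtype)
  rw [e] at h1
  have hq : Module.rank R (B ⧸ A.comap B.subtype) = 0 := by
    have h2 : Module.rank R (B ⧸ A.comap B.subtype) + Module.rank R A
        = Module.rank R A :=
      le_antisymm (h1.trans hr) (self_le_add_left _ _)
    have hq1 : Module.rank R (B ⧸ A.comap B.subtype) < Cardinal.aleph0 :=
      lt_of_le_of_lt (le_trans (self_le_add_right _ _) h2.le) hfin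
    have h3 := congrArg Cardinal.toNat h2
    rw [Cardinal.toNat_add hq1 hfin] at h3
    have h4 : Cardinal.toNat (Module.rank R (B ⧸ A.comap B.subtype)) = 0 := by omega
    rcases (Cardinal.toNat_eq_zero).mp h4 with h | h
    · exact h
    · exact absurd h (not_le.mpr hq1)
  obtain ⟨p, hp, hp0⟩ := rank_eq_zero_iff.mp hq (Submodule.Quotient.mk ⟨x, hx⟩)
  refine ⟨p, hp, ?_⟩
  rw [← Submodule.Quotient.mk_smul, Submodule.Quotient.mk_eq_zero] at hp0
  simpa using hp0

end AuxRank

open LieConformalAlgebra in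
/-- the central series of a finite Lie conformal algebra over `ℂ[∂]`
stabilizes. -/
theorem stmt_5 (L : Type*) [AddCommGroup L] [Module ℂ L]
    [Module ℂ[X] L] [IsScalarTower ℂ ℂ[X] L] [LieConformalAlgebra L]
    [Module.Finite ℂ[X] L] :
    ∃ n : ℕ, ∀ m : ℕ, n ≤ m → lcs (L := L) m = lcs (L := L) n := by
  have hfinS : ∀ S : Submodule ℂ[X] L, Module.Finite ℂ[X] S := fun S =>
    Module.Finite.iff_fg.mpr (IsNoetherian.noetherian S)
  have hfinrk : ∀ S : Submodule ℂ[X] L, Module.rank ℂ[X] S < Cardinal.aleph0 := fun S => by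
    have := hfinS S
    exact Module.rank_lt_aleph0 ℂ[X] S
  -- ℕ-valued ranks of the central series
  set r : ℕ → ℕ := fun n => Cardinal.toNat (Module.rank ℂ[X] (lcs (L := L) n)) with hr
  -- pick an index attaining the minimum rank
  obtain ⟨v, ⟨n₀, hn₀⟩, hmin⟩ := wellFounded_lt.has_min (Set.range r) ⟨r 0, 0, rfl⟩
  have hminle : ∀ m, r n₀ ≤ r m := fun m => by
    rw [hn₀]; exact not_lt.mp (hmin (r m) ⟨m, rfl⟩)
  -- the chain of ranks is antitone
  have hlcsanti : Antitone (lcs (L := L)) := antitone_nat_of_succ_le lcs_antitone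
  have hranti : ∀ m k, m ≤ k → r k ≤ r m := fun m k hmk =>
    Cardinal.toNat_le_toNat (Submodule.rank_mono (hlcsanti hmk)) (hfinrk _)
  -- for m ≥ n₀ the successive quotients are torsion, so the series stabilizes
  have hstep : ∀ m, n₀ ≤ m → lcs (L := L) (m + 2) = lcs (L := L) (m + 1) := by
    intro m hm
    refine le_antisymm (lcs_antitone (m + 1)) ?_
    have hrk : Module.rank ℂ[X] (lcs (L := L) m) ≤ Module.rank ℂ[X] (lcs (L := L) (m + 1)) := by
      have h1 : r (m + 1) = r m :=
        le_antisymm (hranti m (m + 1) (by omega)) ((hranti n₀ m hm).trans (hminle (m + 1)))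
      have h2 : Module.rank ℂ[X] (lcs (L := L) (m + 1)) = Module.rank ℂ[X] (lcs (L := L) m) :=
        Cardinal.toNat_injOn (Set.mem_Iio.mpr (hfinrk _)) (Set.mem_Iio.mpr (hfinrk _)) h1
      exact h2.ge
    have ht := torsion_of_rank_le (lcs_antitone m) hrk (hfinrk _)
    rw [lcs_succ (m + 1), lcs_succ m]
    exact bracketSub_le_of_torsion ht
  refine ⟨n₀ + 1, fun m hm => ?_⟩
  induction m, hm using Nat.le_induction with
  | base => rfl
  | succ m hm ih =>
    rw [← ih]
    obtain ⟨m', rfl⟩ : ∃ m', m = m' + 1 := ⟨m - 1, by omega⟩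
    exact hstep m' (by omega)
end

section
/- Let L be a Lie conformal algebra over C[∂] and M a finite L-module. For φ ∈ Hom_{C[∂]}(L, C[∂]), define M^φ_{−1} = 0 and M^φ_{i+1} = C[∂]-span of {m ∈ M : a_λ m − φ(a)(−λ)·m ∈ M^φ_i[λ] for all a ∈ L}. Then the increasing chain of C[∂]-submodules M^φ_i stabilizes to an L-submodule M^φ of M. -/
open Polynomial

/-- A module over the Lie conformal algebra `L`, presented via mode actions
`a_(n) : M → M` (coefficients of the `λ`-action `a_λ m = Σ λⁿ/n! a_(n) m`). -/
class LCModule (L M : Type*) [AddCommGroup L] [Module ℂ L]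
    [Module ℂ[X] L] [IsScalarTower ℂ ℂ[X] L] [LieConformalAlgebra L]
    [AddCommGroup M] [Module ℂ M] [Module ℂ[X] M] [IsScalarTower ℂ ℂ[X] M] where
  act : ℕ → L →ₗ[ℂ] M →ₗ[ℂ] M
  locality : ∀ (a : L) (m : M), ∃ N : ℕ, ∀ n ≥ N, act n a m = 0
  sesq_left : ∀ (n : ℕ) (a : L) (m : M),
    act n ((X : ℂ[X]) • a) m = (-(n : ℂ)) • act (n - 1) a m
  sesq_right : ∀ (n : ℕ) (a : L) (m : M),
    act n a ((X : ℂ[X]) • m)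
      = (X : ℂ[X]) • act n a m + (n : ℂ) • act (n - 1) a m
  jacobi : ∀ (p q : ℕ) (a b : L) (v : M),
    act p a (act q b v) - act q b (act p a v)
      = ∑ j ∈ Finset.range (p + 1),
          ((p.choose j : ℂ)) • act (p + q - j) (LieConformalAlgebra.nProd j a b) v

open LieConformalAlgebra LCModule

variable {L M : Type*} [AddCommGroup L] [Module ℂ L]
  [Module ℂ[X] L] [IsScalarTower ℂ ℂ[X] L] [LieConformalAlgebra L]
  [AddCommGroup M] [Module ℂ M] [Module ℂ[X] M] [IsScalarTower ℂ ℂ[X] M]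
  [LCModule L M]

/-- The scalar by which `a_(n)` acts on a `φ`-weight vector: the mode form of
`a_λ m = φ(a)(−λ)·m` is `a_(n) m = n!·(−1)ⁿ·(coefficient of ∂ⁿ in φ(a))·m`. -/
noncomputable def wtScalar (φ : L →ₗ[ℂ[X]] ℂ[X]) (a : L) (n : ℕ) : ℂ :=
  (n.factorial : ℂ) * (-1 : ℂ) ^ n * (φ a).coeff n

/-- The chain of generalized weight submodules: `M^φ_{-1} = 0` (indexed here by `0`)
and `M^φ_{i+1}` is the `ℂ[∂]`-span of `{m : a_λ m − φ(a)(−λ)·m ∈ M^φ_i[λ] ∀ a}`. -/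
noncomputable def genWt (φ : L →ₗ[ℂ[X]] ℂ[X]) : ℕ → Submodule ℂ[X] M
  | 0 => ⊥
  | i + 1 => Submodule.span ℂ[X]
      {m : M | ∀ (a : L) (n : ℕ), act n a m - wtScalar φ a n • m ∈ genWt φ i}

/-- for a finite `L`-module `M`, the increasing chain `M^φ_i` of
generalized weight submodules stabilizes to an `L`-submodule `M^φ` of `M`. -/
theorem stmt_17 [Module.Finite ℂ[X] M] (φ : L →ₗ[ℂ[X]] ℂ[X]) :
    Monotone (genWt (L := L) (M := M) φ) ∧
    ∃ k : ℕ, (∀ j : ℕ, k ≤ j → genWt (L := L) (M := M) φ j = genWt (L := L) (M := M) φ k) ∧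
      (∀ (n : ℕ) (a : L), ∀ m ∈ genWt (L := L) (M := M) φ k,
        act (M := M) n a m ∈ genWt (L := L) (M := M) φ k) := by
  classical
  -- monotonicity
  have hle : ∀ i : ℕ, genWt (L := L) (M := M) φ i ≤ genWt φ (i + 1) := by
    intro i
    induction i with
    | zero => exact bot_le
    | succ i ih =>
      show Submodule.span ℂ[X] _ ≤ Submodule.span ℂ[X] _
      apply Submodule.span_mono
      intro m hm a n
      exact ih (hm a n)
  have hmono : Monotone (genWt (L := L) (M := M) φ) := monotone_nat_of_le_succ hle
  refine ⟨hmono, ?_⟩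
  have hN : IsNoetherian ℂ[X] M := inferInstance
  obtain ⟨k, hk⟩ := monotone_stabilizes_iff_noetherian.mpr hN ⟨genWt φ, hmono⟩
  refine ⟨k, fun j hj => (hk j hj).symm, ?_⟩
  have hstab : genWt (L := L) (M := M) φ (k + 1) = genWt φ k := (hk (k + 1) (Nat.le_succ k)).symm
  intro n a m hm
  have hm' : m ∈ genWt (L := L) (M := M) φ (k + 1) := hstab ▸ hm
  have hm'' : m ∈ Submodule.span ℂ[X]
      {m : M | ∀ (a : L) (n : ℕ), act n a m - wtScalar φ a n • m ∈ genWt φ k} := hm'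
  -- by span induction, show all modes act into genWt φ k
  refine Submodule.span_induction
    (p := fun m _ => ∀ (n : ℕ) (a : L), act (M := M) n a m ∈ genWt (L := L) (M := M) φ k)
    ?_ ?_ ?_ ?_ hm'' n a
  · intro x hx n a
    have h1 : act n a x - wtScalar φ a n • x ∈ genWt (L := L) (M := M) φ k := hx a n
    have h2 : x ∈ genWt (L := L) (M := M) φ (k + 1) := Submodule.subset_span hx
    have h3 : wtScalar φ a n • x ∈ genWt (L := L) (M := M) φ k := by
      rw [← hstab]
      rw [← algebraMap_smul ℂ[X] (wtScalar φ a n) x]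
      exact Submodule.smul_mem _ _ h2
    have := Submodule.add_mem _ h1 h3
    simpa using this
  · intro n a
    simp
  · intro x y _ _ hx hy n a
    have := Submodule.add_mem _ (hx n a) (hy n a)
    simpa [map_add] using this
  · intro p x _ hx
    induction p using Polynomial.induction_on with
    | C c =>
      intro n a
      rw [← Polynomial.algebraMap_eq, algebraMap_smul, map_smul]
      exact Submodule.smul_of_tower_mem _ _ (hx n a)
    | add p q hp hq =>
      intro n a
      have : (p + q) • x = p • x + q • x := add_smul p q x
      rw [this, map_add]
      exact Submodule.add_mem _ (hp n a) (hq n a)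
    | monomial j c hj =>
      intro n a
      have heq : (Polynomial.C c * X ^ (j + 1)) • x = (X : ℂ[X]) • ((Polynomial.C c * X ^ j) • x) := by
        rw [← mul_smul]; ring_nf
      rw [heq, LCModule.sesq_right]
      refine Submodule.add_mem _ (Submodule.smul_mem _ _ (hj n a)) ?_
      exact Submodule.smul_of_tower_mem _ _ (hj (n - 1) a)
end
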